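/- For any real s > 20 and any p ∈ [0, 1/2], let D be the distribution on ℤ×ℤ obtained by sampling independent w, x, y uniformly from ⟨s⟩, conditioning on both w + x ∈ ⟨s·p⟩ and w + y ∈ ⟨s·p⟩, and outputting (w + x, w + y). Then Δ_MR(U_{sp} ⊗ U_{sp}, D) ≤ (1 − p)^(−1) · (1 + 4/s). -/

import Mathlib

/-- `⟨s⟩`: the set of integers `{-⌊s/2⌋, …, ⌊s/2⌋}`. -/
noncomputable def intRange (s : ℝ) : Finset ℤ := Finset.Icc (-⌊s / 2⌋) ⌊s / 2⌋

/-- The Max-Ratio distance between two mass functions `D₀, D₁` (with the same support):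
the smallest `λ ≥ 1` such that `D₁ x ∈ [λ⁻¹·D₀ x, λ·D₀ x]` for every `x` in the support. -/
noncomputable def MRdist {α : Type*} (D₀ D₁ : α → ℝ) : ℝ :=
  sInf {l : ℝ | 1 ≤ l ∧ ∀ x, D₀ x ≠ 0 → l⁻¹ * D₀ x ≤ D₁ x ∧ D₁ x ≤ l * D₀ x}

private lemma mr_aux {L Cr Tr Nr Jr Kr : ℝ} (hL1 : 1 ≤ L) (hNpos : 0 < Nr)
    (hKpos : 0 < Kr) (hCJ : Cr ≤ Jr) (hKC : Kr ≤ Cr) (hTJ : Tr ≤ Jr * (Nr * Nr))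
    (hTK : Nr * (Nr * Kr) ≤ Tr) (hJK : Jr ≤ L * Kr) :
    L⁻¹ * (Nr⁻¹ * Nr⁻¹) ≤ Cr / Tr ∧ Cr / Tr ≤ L * (Nr⁻¹ * Nr⁻¹) := by
  have hL0 : (0 : ℝ) < L := lt_of_lt_of_le one_pos hL1
  have hCpos : (0 : ℝ) < Cr := lt_of_lt_of_le hKpos hKC
  have hTpos : (0 : ℝ) < Tr := lt_of_lt_of_le (by positivity) hTK
  constructor
  · have key1 : Tr ≤ L * Cr * (Nr * Nr) := by
      have k1 : Jr * (Nr * Nr) ≤ (L * Kr) * (Nr * Nr) :=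
        mul_le_mul_of_nonneg_right hJK (by positivity)
      have k2 : (L * Kr) * (Nr * Nr) ≤ (L * Cr) * (Nr * Nr) := by
        have : L * Kr ≤ L * Cr := mul_le_mul_of_nonneg_left hKC hL0.le
        exact mul_le_mul_of_nonneg_right this (by positivity)
      linarith
    have heq : L⁻¹ * (Nr⁻¹ * Nr⁻¹) = 1 / (L * (Nr * Nr)) := by field_simp
    rw [heq, div_le_div_iff₀ (by positivity) hTpos]
    nlinarith [key1]
  · have key2 : Cr * (Nr * Nr) ≤ L * Tr := by
      have k1 : Cr * (Nr * Nr) ≤ Jr * (Nr * Nr) :=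
        mul_le_mul_of_nonneg_right hCJ (by positivity)
      have k2 : Jr * (Nr * Nr) ≤ (L * Kr) * (Nr * Nr) :=
        mul_le_mul_of_nonneg_right hJK (by positivity)
      have k3 : (L * Kr) * (Nr * Nr) ≤ L * Tr := by
        have := mul_le_mul_of_nonneg_left hTK hL0.le
        nlinarith [this]
      linarith
    have heq : L * (Nr⁻¹ * Nr⁻¹) = L / (Nr * Nr) := by field_simp
    rw [heq, div_le_div_iff₀ hTpos (by positivity)]
    nlinarith [key2]

theorem MRdist_pair_conditioned_from_uniform (s : ℝ) (hs : 20 < s)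
    (p : ℝ) (hp0 : 0 ≤ p) (hp1 : p ≤ 1 / 2) :
    MRdist
      -- `U_{sp} ⊗ U_{sp}`
      (fun z : ℤ × ℤ =>
        Set.indicator (↑(intRange (s * p)) : Set ℤ)
            (fun _ => ((intRange (s * p)).card : ℝ)⁻¹) z.1 *
          Set.indicator (↑(intRange (s * p)) : Set ℤ)
            (fun _ => ((intRange (s * p)).card : ℝ)⁻¹) z.2)
      -- `D`: the distribution of `(w + x, w + y)` with `w, x, y ← U_s` independent,
      -- conditioned on `w + x ∈ ⟨s·p⟩` and `w + y ∈ ⟨s·p⟩`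
      (Set.indicator ((↑(intRange (s * p)) : Set ℤ) ×ˢ (↑(intRange (s * p)) : Set ℤ))
        fun z : ℤ × ℤ =>
          (((intRange s ×ˢ intRange s ×ˢ intRange s).filter fun q =>
              q.1 + q.2.1 = z.1 ∧ q.1 + q.2.2 = z.2).card : ℝ) /
            (((intRange s ×ˢ intRange s ×ˢ intRange s).filter fun q =>
              q.1 + q.2.1 ∈ intRange (s * p) ∧ q.1 + q.2.2 ∈ intRange (s * p)).card : ℝ))
      ≤ (1 - p)⁻¹ * (1 + 4 / s) := by
  classical
  have hs0 : (0 : ℝ) < s := by linarith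
  have h1p : (0 : ℝ) < 1 - p := by linarith
  set M : ℤ := ⌊s / 2⌋ with hMdef
  set m : ℤ := ⌊s * p / 2⌋ with hmdef
  have hM1 : (M : ℝ) ≤ s / 2 := Int.floor_le _
  have hM2 : s / 2 - 1 < (M : ℝ) := Int.sub_one_lt_floor _
  have hm1 : (m : ℝ) ≤ s * p / 2 := Int.floor_le _
  have hm0 : 0 ≤ m := Int.floor_nonneg.2 (by positivity)
  have hM0 : 0 ≤ M := Int.floor_nonneg.2 (by positivity)
  have hmM : m ≤ M := Int.floor_le_floor (by nlinarith)
  set W : Finset ℤ := Finset.Icc (m - M) (M - m) with hWdef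
  -- cardinalities
  have hcS : (((intRange s).card : ℤ)) = 2 * M + 1 := by
    simp [intRange, Int.card_Icc, ← hMdef]; omega
  have hcR : (((intRange (s * p)).card : ℤ)) = 2 * m + 1 := by
    simp [intRange, Int.card_Icc, ← hmdef]; omega
  have hcW : ((W.card : ℤ)) = 2 * M - 2 * m + 1 := by
    simp [hWdef, Int.card_Icc]; omega
  -- upper bound on C z
  have hCup : ∀ z : ℤ × ℤ,
      (((intRange s ×ˢ intRange s ×ˢ intRange s).filter fun q =>
        q.1 + q.2.1 = z.1 ∧ q.1 + q.2.2 = z.2).card) ≤ (intRange s).card := by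
    intro z
    apply Finset.card_le_card_of_injOn (fun q => q.1)
    · intro q hq
      simp only [Finset.mem_coe, Finset.mem_filter, Finset.mem_product] at hq
      exact hq.1.1
    · rintro ⟨w, x, y⟩ hq ⟨w', x', y'⟩ hq' h
      simp only [Finset.coe_filter, Set.mem_setOf_eq] at hq hq'
      simp only at h
      simp only [Prod.mk.injEq]
      omega
  -- lower bound on C z, for z in R × R
  have hClo : ∀ z : ℤ × ℤ, z.1 ∈ intRange (s * p) → z.2 ∈ intRange (s * p) →
      W.card ≤ (((intRange s ×ˢ intRange s ×ˢ intRange s).filter fun q =>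
        q.1 + q.2.1 = z.1 ∧ q.1 + q.2.2 = z.2).card) := by
    intro z hz1 hz2
    simp only [intRange, Finset.mem_Icc, ← hmdef] at hz1 hz2
    apply Finset.card_le_card_of_injOn (fun w => (w, z.1 - w, z.2 - w))
    · intro w hw
      simp only [Finset.mem_coe, hWdef, Finset.mem_Icc] at hw
      simp only [Finset.mem_coe, Finset.mem_filter, Finset.mem_product, intRange, Finset.mem_Icc, ← hMdef]
      omega
    · intro a _ b _ h
      exact (Prod.ext_iff.1 h).1
  -- upper bound on T
  have hTup : (((intRange s ×ˢ intRange s ×ˢ intRange s).filter fun q =>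
        q.1 + q.2.1 ∈ intRange (s * p) ∧ q.1 + q.2.2 ∈ intRange (s * p)).card)
      ≤ (intRange s).card * ((intRange (s * p)).card * (intRange (s * p)).card) := by
    have : (((intRange s ×ˢ intRange s ×ˢ intRange s).filter fun q =>
        q.1 + q.2.1 ∈ intRange (s * p) ∧ q.1 + q.2.2 ∈ intRange (s * p)).card)
        ≤ (intRange s ×ˢ intRange (s * p) ×ˢ intRange (s * p)).card := by
      apply Finset.card_le_card_of_injOn (fun q => (q.1, q.1 + q.2.1, q.1 + q.2.2))
      · rintro ⟨w, x, y⟩ hq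
        simp only [Finset.mem_coe, Finset.mem_filter, Finset.mem_product] at hq ⊢
        exact ⟨hq.1.1, hq.2.1, hq.2.2⟩
      · rintro ⟨w, x, y⟩ _ ⟨w', x', y'⟩ _ h
        simp only [Prod.mk.injEq] at h ⊢
        omega
    simpa [Finset.card_product] using this
  -- lower bound on T
  have hTlo : (intRange (s * p)).card * ((intRange (s * p)).card * W.card)
      ≤ (((intRange s ×ˢ intRange s ×ˢ intRange s).filter fun q =>
        q.1 + q.2.1 ∈ intRange (s * p) ∧ q.1 + q.2.2 ∈ intRange (s * p)).card) := by
    have : (intRange (s * p) ×ˢ intRange (s * p) ×ˢ W).card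
        ≤ (((intRange s ×ˢ intRange s ×ˢ intRange s).filter fun q =>
        q.1 + q.2.1 ∈ intRange (s * p) ∧ q.1 + q.2.2 ∈ intRange (s * p)).card) := by
      apply Finset.card_le_card_of_injOn
        (fun q => (q.2.2, q.1 - q.2.2, q.2.1 - q.2.2))
      · rintro ⟨a, b, w⟩ hq
        simp only [Finset.mem_coe, Finset.mem_product, hWdef, intRange, Finset.mem_Icc,
          ← hmdef, ← hMdef] at hq
        simp only [Finset.mem_coe, Finset.mem_filter, Finset.mem_product, intRange, Finset.mem_Icc,
          ← hmdef, ← hMdef]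
        omega
      · rintro ⟨a, b, w⟩ _ ⟨a', b', w'⟩ _ h
        simp only [Prod.mk.injEq] at h ⊢
        omega
    simpa [Finset.card_product] using this
  -- real abbreviations
  set L : ℝ := (1 - p)⁻¹ * (1 + 4 / s) with hLdef
  have hL1 : (1 : ℝ) ≤ L := by
    have h1 : (1 : ℝ) ≤ (1 - p)⁻¹ := by
      nlinarith [mul_inv_cancel₀ h1p.ne', inv_pos.2 h1p]
    have h2 : (1 : ℝ) ≤ 1 + 4 / s := by
      have : (0 : ℝ) < 4 / s := by positivity
      linarith
    nlinarith [mul_le_mul h1 h2 zero_le_one (by positivity : (0:ℝ) ≤ (1 - p)⁻¹)]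
  have hL0 : (0 : ℝ) < L := lt_of_lt_of_le one_pos hL1
  have hJr : (((intRange s).card : ℝ)) = 2 * (M : ℝ) + 1 := by exact_mod_cast hcS
  have hKr : ((W.card : ℝ)) = 2 * (M : ℝ) - 2 * (m : ℝ) + 1 := by exact_mod_cast hcW
  have hNpos : (0 : ℝ) < ((intRange (s * p)).card : ℝ) := by
    have : ((0:ℤ)) < ((intRange (s * p)).card : ℤ) := by omega
    exact_mod_cast this
  have hKpos : (0 : ℝ) < ((W.card : ℝ)) := by
    have : ((0:ℤ)) < ((W.card : ℤ)) := by omega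
    exact_mod_cast this
  -- key inequality J ≤ L * K
  have hJK : (((intRange s).card : ℝ)) ≤ L * (W.card : ℝ) := by
    rw [hJr, hKr, hLdef]
    have heq : (1 - p)⁻¹ * (1 + 4 / s) = (s + 4) / ((1 - p) * s) := by
      field_simp
    rw [heq, div_mul_eq_mul_div, le_div_iff₀ (by positivity)]
    nlinarith [mul_nonneg hp0 hs0.le, sq_nonneg (s * p), sq_nonneg ((M:ℝ) - s/2)]
  -- main bound
  apply csInf_le ⟨1, fun l hl => hl.1⟩
  constructor
  · exact hL1
  · intro z hz
    have hz1 : z.1 ∈ intRange (s * p) := by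
      by_contra h
      exact hz (by simp [Set.indicator_apply, Finset.mem_coe, h])
    have hz2 : z.2 ∈ intRange (s * p) := by
      by_contra h
      exact hz (by simp [Set.indicator_apply, Finset.mem_coe, h])
    simp only [Set.indicator_apply, Set.mem_prod, Finset.mem_coe, hz1, hz2, if_true, and_self]
    exact mr_aux hL1 hNpos hKpos (by exact_mod_cast hCup z) (by exact_mod_cast hClo z hz1 hz2)
      (by exact_mod_cast hTup) (by exact_mod_cast hTlo) hJK
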